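/- Divergence-free quantities after inversion: Let n ≥ 2, let U ⊆ ℝ² be open, and let u : U → ℝ^{n+1} be smooth, nowhere vanishing, with Δu = 0 on U. Set v = u/|u|². Then for all 1 ≤ i, j ≤ n+1, the vector field X_{i,j} = 2 (v_j ∇v_i − v_i ∇v_j)/|v|⁴ satisfies div(X_{i,j}) = 0 on U. -/

import Mathlib

open MeasureTheory Filter Topology Set
open scoped RealInnerProductSpace

noncomputable section

/-- The Euclidean plane. -/
abbrev E2 : Type := EuclideanSpace ℝ (Fin 2)
/-- Euclidean space `ℝ^{n+1}`. -/
abbrev Ey (n : ℕ) : Type := EuclideanSpace ℝ (Fin (n + 1))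

/-- Standard basis vectors of the plane. -/
def e2 (i : Fin 2) : E2 := EuclideanSpace.single i 1

/-- The Laplacian of a map on the plane. -/
def lapl {F : Type*} [NormedAddCommGroup F] [NormedSpace ℝ F] (u : E2 → F) (x : E2) : F :=
  ∑ i : Fin 2, fderiv ℝ (fun y => fderiv ℝ u y (e2 i)) x (e2 i)

/-- The squared (Frobenius) norm `|∇u|² = Σ_j |∇u_j|²` of the gradient. -/
def gradSq {F : Type*} [NormedAddCommGroup F] [NormedSpace ℝ F] (u : E2 → F) (x : E2) : ℝ :=
  ∑ i : Fin 2, ‖fderiv ℝ u x (e2 i)‖ ^ 2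

/-- The divergence of a plane vector field. -/
def divE (F : E2 → E2) (x : E2) : ℝ :=
  ∑ i : Fin 2, fderiv ℝ F x (e2 i) i

/-- The composition `σ ∘ u` of `u` with the inversion `σ(z) = z/|z|²` with respect to the
unit sphere. -/
def invmap {n : ℕ} (u : E2 → Ey n) : E2 → Ey n :=
  fun x => (‖u x‖ ^ 2)⁻¹ • u x

/-- The vector field `X_{i,j} = 2 (v_j ∇v_i − v_i ∇v_j)/|v|⁴`. -/
def Xfield {n : ℕ} (v : E2 → Ey n) (i j : Fin (n + 1)) (x : E2) : E2 :=
  (2 / ‖v x‖ ^ 4) •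
    (v x j • gradient (fun y => v y i) x - v x i • gradient (fun y => v y j) x)

lemma clm_comp_fderiv {E F G : Type*} [NormedAddCommGroup E] [NormedSpace ℝ E]
    [NormedAddCommGroup F] [NormedSpace ℝ F] [NormedAddCommGroup G] [NormedSpace ℝ G]
    (L : F →L[ℝ] G) {f : E → F} {x : E} (hf : DifferentiableAt ℝ f x) :
    fderiv ℝ (fun z => L (f z)) x = L.comp (fderiv ℝ f x) :=
  (L.hasFDerivAt.comp x hf.hasFDerivAt).fderiv

lemma grad_coord (f : E2 → ℝ) (y : E2) (a : Fin 2) :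
    gradient f y a = fderiv ℝ f y (e2 a) := by
  have : fderiv ℝ f y (e2 a) = ⟪gradient f y, e2 a⟫ := by
    rw [gradient, InnerProductSpace.toDual_symm_apply]
  rw [this, e2, EuclideanSpace.inner_single_right]
  simp

/-- **Divergence-free quantities after inversion.** If `u` is smooth, nowhere vanishing
and harmonic on an open set `U ⊆ ℝ²` and `v = u/|u|²`, then for all `1 ≤ i,j ≤ n+1` the
vector field `X_{i,j} = 2 (v_j ∇v_i − v_i ∇v_j)/|v|⁴` is divergence free on `U`. -/
theorem divergence_free_after_inversion (n : ℕ) (hn : 2 ≤ n)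
    (U : Set E2) (hU : IsOpen U) (u : E2 → Ey n)
    (hsm : ContDiffOn ℝ (⊤ : ℕ∞) u U) (hnv : ∀ x ∈ U, u x ≠ 0)
    (hharm : ∀ x ∈ U, lapl u x = 0) :
    ∀ i j : Fin (n + 1), ∀ x ∈ U,
      divE (Xfield (invmap u) i j) x = 0 := by
  intro i j x hx
  have hUx : U ∈ 𝓝 x := hU.mem_nhds hx
  -- basic differentiability facts
  have hca : ∀ y ∈ U, ContDiffAt ℝ (⊤ : ℕ∞) u y := fun y hy => hsm.contDiffAt (hU.mem_nhds hy)
  have hud : ∀ y ∈ U, DifferentiableAt ℝ u y := fun y hy => (hca y hy).differentiableAt (by simp)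
  set uc : Fin (n+1) → E2 → ℝ := fun k y => u y k with huc
  have hucca : ∀ k, ∀ y ∈ U, ContDiffAt ℝ (⊤ : ℕ∞) (uc k) y := by
    intro k y hy
    have := (EuclideanSpace.proj k).contDiff.contDiffAt.comp y (hca y hy)
    simpa [Function.comp_def] using this
  have hucd : ∀ k, ∀ y ∈ U, DifferentiableAt ℝ (uc k) y := fun k y hy =>
    ((hucca k y hy).differentiableAt (by simp))
  have hucf : ∀ k, ∀ y ∈ U, fderiv ℝ (uc k) y = (EuclideanSpace.proj k).comp (fderiv ℝ u y) :=
    fun k y hy => clm_comp_fderiv (EuclideanSpace.proj k) (hud y hy)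
  -- D k a y = ∂_a u_k (y)
  set D : Fin (n+1) → Fin 2 → E2 → ℝ := fun k a y => fderiv ℝ (uc k) y (e2 a) with hD
  have hDd : ∀ k a, ∀ y ∈ U, DifferentiableAt ℝ (D k a) y := by
    intro k a y hy
    have h1 : ContDiffAt ℝ 1 (fun z => fderiv ℝ (uc k) z) y :=
      (hucca k y hy).fderiv_right (WithTop.coe_le_coe.mpr le_top)
    exact (ContinuousLinearMap.apply ℝ ℝ (e2 a)).differentiable.differentiableAt.comp y
      (h1.differentiableAt one_ne_zero)
  -- the simplified field
  set G : Fin (n+1) → E2 → E2 := fun k y => ∑ a : Fin 2, D k a y • e2 a with hG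
  set f : E2 → E2 := fun y => (2:ℝ) • (uc j y • G i y - uc i y • G j y) with hf
  have hGd : ∀ k, ∀ y ∈ U, DifferentiableAt ℝ (G k) y := fun k y hy =>
    DifferentiableAt.fun_sum (fun a _ => (hDd k a y hy).smul_const (e2 a))
  have hfd : ∀ y ∈ U, DifferentiableAt ℝ f y := fun y hy =>
    ((( hucd j y hy).smul (hGd i y hy)).sub ((hucd i y hy).smul (hGd j y hy))).const_smul (2:ℝ)
  have hGa : ∀ k y a, G k y a = D k a y := by
    intro k y a
    simp [hG, Finset.sum_apply, e2, EuclideanSpace.single_apply]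
    fin_cases a <;> simp
  -- Step A: Xfield (invmap u) i j = f on U
  have hA : ∀ y ∈ U, Xfield (invmap u) i j y = f y := by
    intro y hy
    have hc : (0:ℝ) < ‖u y‖ := norm_pos_iff.mpr (hnv y hy)
    have hns : DifferentiableAt ℝ (fun z => ‖u z‖ ^ 2) y :=
      ((contDiff_norm_sq ℝ).contDiffAt.comp y (hca y hy)).differentiableAt (by simp)
    have hnsi : DifferentiableAt ℝ (fun z => (‖u z‖ ^ 2)⁻¹) y :=
      hns.inv (by positivity)
    -- coordinates of v
    have hvco : ∀ k : Fin (n+1), (fun z => invmap u z k) = fun z => (‖u z‖ ^ 2)⁻¹ * uc k z := by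
      intro k; funext z; simp [invmap, huc]
    have hvd : ∀ k, DifferentiableAt ℝ (fun z => invmap u z k) y := by
      intro k; rw [hvco k]; exact hnsi.mul (hucd k y hy)
    have hvf : ∀ k a, fderiv ℝ (fun z => invmap u z k) y (e2 a)
        = (‖u y‖ ^ 2)⁻¹ * D k a y + uc k y * fderiv ℝ (fun z => (‖u z‖ ^ 2)⁻¹) y (e2 a) := by
      intro k a
      rw [hvco k, fderiv_fun_mul hnsi (hucd k y hy)]
      simp [hD, mul_comm]
    have hnv' : ‖invmap u y‖ = ‖u y‖⁻¹ := by
      rw [invmap, norm_smul]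
      rw [norm_inv, norm_pow, norm_norm]
      field_simp
    apply PiLp.ext
    intro a
    have lhs : Xfield (invmap u) i j y a
        = (2 / ‖invmap u y‖ ^ 4) * (invmap u y j * fderiv ℝ (fun z => invmap u z i) y (e2 a)
            - invmap u y i * fderiv ℝ (fun z => invmap u z j) y (e2 a)) := by
      simp [Xfield, grad_coord, mul_sub]
    rw [lhs, hnv', hvf, hvf]
    have hvy : ∀ k, invmap u y k = (‖u y‖ ^ 2)⁻¹ * uc k y := by
      intro k; simp [invmap, huc]
    rw [hvy, hvy]
    have rhs : f y a = 2 * (uc j y * D i a y - uc i y * D j a y) := by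
      simp [hf, hGa, mul_sub]
    rw [rhs]
    have h4 : ‖u y‖ ≠ 0 := ne_of_gt hc
    field_simp
    ring
  -- replace Xfield by f under fderiv
  have hev : Xfield (invmap u) i j =ᶠ[𝓝 x] f := eventually_of_mem hUx hA
  have hdiv : divE (Xfield (invmap u) i j) x = divE f x := by
    unfold divE; simp_rw [hev.fderiv_eq]
  rw [hdiv]
  -- Step B: coordinate Laplacians vanish
  have hB : ∀ k : Fin (n+1), ∑ a : Fin 2, fderiv ℝ (D k a) x (e2 a) = 0 := by
    intro k
    have h0 : lapl u x = 0 := hharm x hx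
    have h0k : lapl u x k = 0 := by rw [h0]; rfl
    rw [lapl] at h0k
    have hsum : (∑ a : Fin 2, fderiv ℝ (fun y => fderiv ℝ u y (e2 a)) x (e2 a)) k
        = ∑ a : Fin 2, (fderiv ℝ (fun y => fderiv ℝ u y (e2 a)) x (e2 a)) k := by
      rw [WithLp.ofLp_sum]; exact Finset.sum_apply k _ _
    rw [hsum] at h0k
    rw [← h0k]
    apply Finset.sum_congr rfl
    intro a _
    have hFd : DifferentiableAt ℝ (fun y => fderiv ℝ u y (e2 a)) x := by
      have h1 : ContDiffAt ℝ 1 (fun z => fderiv ℝ u z) x := (hca x hx).fderiv_right (WithTop.coe_le_coe.mpr le_top)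
      exact (ContinuousLinearMap.apply ℝ (Ey n) (e2 a)).differentiable.differentiableAt.comp x
        (h1.differentiableAt one_ne_zero)
    have h2 : fderiv ℝ (fun y => fderiv ℝ u y (e2 a) k) x (e2 a)
        = (fderiv ℝ (fun y => fderiv ℝ u y (e2 a)) x (e2 a)) k := by
      rw [show (fun y => fderiv ℝ u y (e2 a) k) = fun y =>
        (EuclideanSpace.proj k) ((fun z => fderiv ℝ u z (e2 a)) y) from rfl,
        clm_comp_fderiv _ hFd]
      rfl
    rw [← h2]
    have hev2 : (fun y => fderiv ℝ (uc k) y (e2 a)) =ᶠ[𝓝 x]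
        (fun y => fderiv ℝ u y (e2 a) k) := by
      refine eventually_of_mem hUx (fun y hy => ?_)
      simp [hucf k y hy]
    exact congrFun (congrArg _ (hev2.fderiv_eq)) (e2 a)
  -- Step C: compute divE f x
  have hcoord : ∀ a : Fin 2, fderiv ℝ f x (e2 a) a
      = 2 * ((D j a x * D i a x + uc j x * fderiv ℝ (D i a) x (e2 a))
           - (D i a x * D j a x + uc i x * fderiv ℝ (D j a) x (e2 a))) := by
    intro a
    have h1 : fderiv ℝ f x (e2 a) a = fderiv ℝ (fun y => f y a) x (e2 a) := by
      rw [show (fun y => f y a) = fun y => (EuclideanSpace.proj a) (f y) from rfl,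
        clm_comp_fderiv _ (hfd x hx)]
      rfl
    have h2 : (fun y => f y a) = fun y => 2 * (uc j y * D i a y - uc i y * D j a y) := by
      funext y; simp [hf, hGa, mul_sub]
    rw [h1, h2]
    have hji : DifferentiableAt ℝ (fun y => uc j y * D i a y) x :=
      (hucd j x hx).mul (hDd i a x hx)
    have hij : DifferentiableAt ℝ (fun y => uc i y * D j a y) x :=
      (hucd i x hx).mul (hDd j a x hx)
    rw [fderiv_const_mul (a := fun y => uc j y * D i a y - uc i y * D j a y) (hji.sub hij) 2, fderiv_fun_sub hji hij,
      fderiv_fun_mul (hucd j x hx) (hDd i a x hx), fderiv_fun_mul (hucd i x hx) (hDd j a x hx)]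
    simp [hD]
    ring
  rw [divE]
  simp_rw [hcoord]
  rw [Finset.sum_congr rfl (fun a _ => by ring_nf :
    ∀ a ∈ Finset.univ, (2 * ((D j a x * D i a x + uc j x * fderiv ℝ (D i a) x (e2 a))
      - (D i a x * D j a x + uc i x * fderiv ℝ (D j a) x (e2 a))))
      = 2 * uc j x * fderiv ℝ (D i a) x (e2 a) - 2 * uc i x * fderiv ℝ (D j a) x (e2 a))]
  rw [Finset.sum_sub_distrib]
  simp_rw [mul_assoc, ← Finset.mul_sum]
  rw [hB i, hB j]
  ring
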